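/- (Necessity for 2-vertex-connected subgraphs.) Suppose Γ is 2-vertex connected, has at least two vertices and has no 1-valent vertices. If φ is C₀-ample on Γ in Γ', then deg(D_φ) ≥ 2 and deg(D_φ|_{ℙ¹_v}) ≥ 1 for every vertex v of Γ with φ(v) = h. -/

import Mathlib

attribute [local instance] Classical.propDecidable

/-- A finite graph `Σ` with bounded edges (each joining two distinct vertices)
and unbounded edges (leaves, each attached to a single vertex).  Each bounded
edge `e` carries a direction vector `dir e ∈ ℤ^n` at its source (the direction
at the target endpoint is `-dir e`), and each unbounded edge `u` carries a
direction vector `udir u` at its attaching vertex. -/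
structure TropGraph (n : ℕ) where
  V : Type
  BE : Type
  UE : Type
  [fintV : Fintype V]
  [fintBE : Fintype BE]
  [fintUE : Fintype UE]
  src : BE → V
  tgt : BE → V
  src_ne_tgt : ∀ e, src e ≠ tgt e
  att : UE → V
  dir : BE → Fin n → ℤ
  udir : UE → Fin n → ℤ

attribute [instance] TropGraph.fintV TropGraph.fintBE TropGraph.fintUE

/-- `⟨m, d⟩ = Σ i, m i * d i`. -/
def pairDot {n : ℕ} (m d : Fin n → ℤ) : ℤ := ∑ i, m i * d i

namespace TropGraph

variable {n : ℕ}

/-- The degree of a vertex: the number of edge-endpoints at `v`. -/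
noncomputable def degree (G : TropGraph n) (v : G.V) : ℕ :=
  (Finset.univ.filter (fun e => G.src e = v)).card +
    (Finset.univ.filter (fun e => G.tgt e = v)).card +
    (Finset.univ.filter (fun u => G.att u = v)).card

/-- A piecewise-linear function on `Σ` with integer slopes: real values at the
vertices, differing by integers along bounded edges (which have length 1, so the
slope of `φ` at `src e` along a bounded edge `e` is `φ(tgt e) - φ(src e)`),
together with an assigned integer slope on each unbounded edge. -/
structure PL (G : TropGraph n) where
  val : G.V → ℝ
  uslope : G.UE → ℤ
  int_slope : ∀ e : G.BE, ∃ k : ℤ, val (G.tgt e) - val (G.src e) = (k : ℝ)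

namespace PL

variable {G : TropGraph n}

/-- `φ` is nonnegative: all vertex values and all slopes on unbounded edges are `≥ 0`. -/
def Nonneg (φ : PL G) : Prop := (∀ v, 0 ≤ φ.val v) ∧ ∀ u, 0 ≤ φ.uslope u

/-- The sum `Σ_{e ∋ v} s_φ(v,e)` of the slopes of `φ` at `v` along all edges at `v`,
so that the Laplacian is `Δ(φ)(v) = -slopeSum φ v`. -/
noncomputable def slopeSum (φ : PL G) (v : G.V) : ℝ :=
  (∑ e ∈ Finset.univ.filter (fun e => G.src e = v), (φ.val (G.tgt e) - φ.val (G.src e))) +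
    (∑ e ∈ Finset.univ.filter (fun e => G.tgt e = v), (φ.val (G.src e) - φ.val (G.tgt e))) +
    ∑ u ∈ Finset.univ.filter (fun u => G.att u = v), (φ.uslope u : ℝ)

/-- Condition (1): `Δ(φ) + K_Σ ≥ 0`, i.e. `Σ_{e ∋ v} s_φ(v,e) ≤ deg v - 2` for all `v`. -/
def CanonicalBound (φ : PL G) : Prop := ∀ v : G.V, φ.slopeSum v ≤ (G.degree v : ℝ) - 2

/-- Condition (2): `φ` vanishes identically on every edge `e` with `m·e ≠ 0`. -/
def VanishesNonOrth (φ : PL G) (m : Fin n → ℤ) : Prop :=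
  (∀ e : G.BE, pairDot m (G.dir e) ≠ 0 → φ.val (G.src e) = 0 ∧ φ.val (G.tgt e) = 0) ∧
    ∀ u : G.UE, pairDot m (G.udir u) ≠ 0 → φ.val (G.att u) = 0 ∧ φ.uslope u = 0

/-- Condition (3): on every edge `e` with `m·e = 0` the slope of `φ` is nonzero. -/
def NonzeroSlopeOrth (φ : PL G) (m : Fin n → ℤ) : Prop :=
  (∀ e : G.BE, pairDot m (G.dir e) = 0 → φ.val (G.src e) ≠ φ.val (G.tgt e)) ∧
    ∀ u : G.UE, pairDot m (G.udir u) = 0 → φ.uslope u ≠ 0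

end PL

end TropGraph

/-- The order of vanishing of a rational function `f` on `ℙ¹ = ℂ ∪ {∞}`
(modeled as `Option ℂ`, with `none` the point at infinity) at a point `q`;
negative at poles.  (For `f = 0` this gives the junk value `0`, i.e. `div 0 = 0`.) -/
noncomputable def ordAt (f : RatFunc ℂ) : Option ℂ → ℤ
  | Option.none => (f.denom.natDegree : ℤ) - (f.num.natDegree : ℤ)
  | Option.some a => (f.num.rootMultiplicity a : ℤ) - (f.denom.rootMultiplicity a : ℤ)

/-- The value of a rational function `f` on `ℙ¹ = ℂ ∪ {∞}` at a point `q`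
(junk value where `f` is not regular). -/
noncomputable def evalAt (f : RatFunc ℂ) : Option ℂ → ℂ
  | Option.none => if f.num.natDegree = f.denom.natDegree then
      f.num.leadingCoeff / f.denom.leadingCoeff else 0
  | Option.some a => RatFunc.eval (RingHom.id ℂ) a f

namespace TropGraph

/-- The coefficient at the point `q` of the component `ℙ¹_v` of the divisor `D_φ`:
`D_φ = Σ_{v, φ(v) = h} Σ_{e ∈ E_v^∂, s_φ(v,e) < 0} (−s_φ(v,e))·(p_e^v)`, where
`E_v^∂` is the set of edges of `Γ'` not in `Γ` incident to `v`, and `p_e^v` is the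
boundary point `pS e`/`pT e`/`pU e` of `ℙ¹_v` assigned to the endpoint `v` of `e`. -/
noncomputable def Dcoef {n : ℕ} (G : TropGraph n) (φ : PL G)
    (E' : Finset G.BE) (U' : Finset G.UE) (EΓ : Finset G.BE)
    (pS pT : G.BE → Option ℂ) (pU : G.UE → Option ℂ) (h : ℝ)
    (v : G.V) (q : Option ℂ) : ℝ :=
  if φ.val v = h then
    (∑ e ∈ E'.filter (fun e => e ∉ EΓ ∧ G.src e = v ∧
        φ.val (G.tgt e) - φ.val (G.src e) < 0 ∧ pS e = q),
        (φ.val (G.src e) - φ.val (G.tgt e))) +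
      (∑ e ∈ E'.filter (fun e => e ∉ EΓ ∧ G.tgt e = v ∧
        φ.val (G.src e) - φ.val (G.tgt e) < 0 ∧ pT e = q),
        (φ.val (G.tgt e) - φ.val (G.src e))) +
      ∑ u ∈ U'.filter (fun u => G.att u = v ∧ φ.uslope u < 0 ∧ pU u = q),
        (-(φ.uslope u) : ℝ)
  else 0

/-- The degree of the part `D_φ|_{ℙ¹_v}` of the divisor `D_φ` supported on the
component `ℙ¹_v`. -/
noncomputable def DdegAt {n : ℕ} (G : TropGraph n) (φ : PL G)
    (E' : Finset G.BE) (U' : Finset G.UE) (EΓ : Finset G.BE) (h : ℝ) (v : G.V) : ℝ :=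
  if φ.val v = h then
    (∑ e ∈ E'.filter (fun e => e ∉ EΓ ∧ G.src e = v ∧
        φ.val (G.tgt e) - φ.val (G.src e) < 0),
        (φ.val (G.src e) - φ.val (G.tgt e))) +
      (∑ e ∈ E'.filter (fun e => e ∉ EΓ ∧ G.tgt e = v ∧
        φ.val (G.src e) - φ.val (G.tgt e) < 0),
        (φ.val (G.tgt e) - φ.val (G.src e))) +
      ∑ u ∈ U'.filter (fun u => G.att u = v ∧ φ.uslope u < 0), (-(φ.uslope u) : ℝ)
  else 0

/-- The total degree `deg(D_φ)` of the divisor `D_φ`. -/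
noncomputable def Ddeg {n : ℕ} (G : TropGraph n) (φ : PL G) (PΓ : Finset G.V)
    (E' : Finset G.BE) (U' : Finset G.UE) (EΓ : Finset G.BE) (h : ℝ) : ℝ :=
  ∑ v ∈ PΓ, DdegAt G φ E' U' EΓ h v

/-- `φ` is `C₀`-ample on `Γ` in `Γ'`: there is a family `(f_v)_{v ∈ V(Γ)}` of rational
functions on the components `ℙ¹_v` of the nodal curve `(C_Γ)₀` with
`div(f_v) + D_φ|_{ℙ¹_v} ≥ 0` (in particular each `f_v` is regular at the node points),
matching at the nodes (`f_v(p_e^v) = f_w(p_e^w)` for every edge `e = vw` of `Γ`), and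
with `f_v` nonconstant precisely for the vertices `v` with `φ(v) = h`. -/
noncomputable def C0Ample {n : ℕ} (G : TropGraph n) (φ : PL G)
    (PΓ : Finset G.V) (E' : Finset G.BE) (U' : Finset G.UE) (EΓ : Finset G.BE)
    (pS pT : G.BE → Option ℂ) (pU : G.UE → Option ℂ) (h : ℝ) : Prop :=
  ∃ f : G.V → RatFunc ℂ,
    (∀ v ∈ PΓ, ∀ q : Option ℂ,
      0 ≤ Dcoef G φ E' U' EΓ pS pT pU h v q + (ordAt (f v) q : ℝ)) ∧
    (∀ e ∈ EΓ, evalAt (f (G.src e)) (pS e) = evalAt (f (G.tgt e)) (pT e)) ∧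
    ∀ v ∈ PΓ, ((¬ ∃ c : ℂ, f v = RatFunc.C c) ↔ φ.val v = h)

end TropGraph


-- ===================== auxiliary lemmas =====================

section Aux

lemma aux_sum_filter_and_le {α : Type*} (s : Finset α) (P Q : α → Prop) (t : α → ℝ)
    (ht : ∀ a, P a → 0 ≤ t a) :
    ∑ a ∈ s.filter (fun a => P a ∧ Q a), t a ≤ ∑ a ∈ s.filter P, t a := by
  apply Finset.sum_le_sum_of_subset_of_nonneg
  · intro a ha
    simp only [Finset.mem_filter] at *
    tauto
  · intro a ha _
    exact ht a (Finset.mem_filter.mp ha).2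

lemma aux_sum_filter_and_pair_le {α β : Type*} (s : Finset α) (P : α → Prop) (g : α → β)
    (q₁ q₂ : β) (hq : q₁ ≠ q₂) (t : α → ℝ) (ht : ∀ a, P a → 0 ≤ t a) :
    (∑ a ∈ s.filter (fun a => P a ∧ g a = q₁), t a) +
      (∑ a ∈ s.filter (fun a => P a ∧ g a = q₂), t a) ≤ ∑ a ∈ s.filter P, t a := by
  rw [← Finset.sum_union]
  · apply Finset.sum_le_sum_of_subset_of_nonneg
    · intro a ha
      simp only [Finset.mem_union, Finset.mem_filter] at *
      tauto
    · intro a ha _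
      exact ht a (Finset.mem_filter.mp ha).2
  · rw [Finset.disjoint_left]
    intro a h1 h2
    simp only [Finset.mem_filter] at h1 h2
    exact hq (h1.2.2 ▸ h2.2.2 ▸ rfl)

lemma aux_sum_filter_nonneg {α : Type*} (s : Finset α) (P : α → Prop) (t : α → ℝ)
    (ht : ∀ a, P a → 0 ≤ t a) : 0 ≤ ∑ a ∈ s.filter P, t a :=
  Finset.sum_nonneg (fun a ha => ht a (Finset.mem_filter.mp ha).2)

lemma aux_evalAt_C (c : ℂ) (q : Option ℂ) : evalAt (RatFunc.C c) q = c := by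
  cases q with
  | none => simp [evalAt, RatFunc.num_C, RatFunc.denom_C]
  | some a => simp [evalAt, RatFunc.eval, RatFunc.num_C, RatFunc.denom_C]

lemma aux_not_root_both (f : RatFunc ℂ) (a : ℂ) (h1 : f.num.eval a = 0)
    (h2 : f.denom.eval a = 0) : False := by
  obtain ⟨u, v, huv⟩ := f.isCoprime_num_denom
  have := congrArg (Polynomial.eval a) huv
  simp [h1, h2] at this

lemma aux_num_rm_zero (f : RatFunc ℂ) (a : ℂ) (h2 : f.denom.eval a = 0) :
    f.num.rootMultiplicity a = 0 :=
  Polynomial.rootMultiplicity_eq_zero (fun hr => aux_not_root_both f a hr h2)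

lemma aux_eq_C_of_const (f : RatFunc ℂ) (hden : f.denom.natDegree = 0)
    (hnum : f.num.natDegree = 0) : ∃ c, f = RatFunc.C c := by
  refine ⟨f.num.coeff 0, ?_⟩
  have h1 : f.denom = 1 := (Polynomial.Monic.natDegree_eq_zero f.monic_denom).mp hden
  have h2 : f.num = Polynomial.C (f.num.coeff 0) := Polynomial.eq_C_of_natDegree_eq_zero hnum
  conv_lhs => rw [← f.num_div_denom, h1, h2]
  simp [RatFunc.algebraMap_C]

lemma aux_exists_pole (f : RatFunc ℂ) (h : ¬∃ c, f = RatFunc.C c) : ∃ q, ordAt f q ≤ -1 := by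
  by_contra hq
  push_neg at hq
  have hq' : ∀ q, 0 ≤ ordAt f q := by intro q; have := hq q; omega
  have hf0 : f ≠ 0 := by rintro rfl; exact h ⟨0, by simp⟩
  have hden : f.denom.natDegree = 0 := by
    by_contra hd
    obtain ⟨a, ha⟩ := Complex.exists_root (f := f.denom)
      (Polynomial.natDegree_pos_iff_degree_pos.mp (Nat.pos_of_ne_zero hd))
    have h1 : 0 < f.denom.rootMultiplicity a :=
      (Polynomial.rootMultiplicity_pos f.denom_ne_zero).mpr ha
    have h2 := aux_num_rm_zero f a ha
    have := hq' (Option.some a)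
    simp only [ordAt, h2] at this
    omega
  have hnum : f.num.natDegree = 0 := by
    have := hq' Option.none
    simp only [ordAt, hden] at this
    omega
  exact h (aux_eq_C_of_const f hden hnum)

lemma aux_deg_le_one (f : RatFunc ℂ) (D : Option ℂ → ℝ)
    (hord : ∀ q, 0 ≤ D q + (ordAt f q : ℝ))
    (hone : ∀ q, D q < 2)
    (hpair : ∀ q₁ q₂, q₁ ≠ q₂ → D q₁ + D q₂ < 2) :
    f.num.natDegree ≤ 1 ∧ f.denom.natDegree ≤ 1 := by
  have hD1 : ∀ q, ordAt f q ≤ -1 → 1 ≤ D q := by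
    intro q hq
    have h1 := hord q
    have : (ordAt f q : ℝ) ≤ -1 := by exact_mod_cast hq
    linarith
  have hdd : f.denom ≠ 0 := f.denom_ne_zero
  have hden : f.denom.natDegree ≤ 1 := by
    by_contra hd
    push_neg at hd
    obtain ⟨a, ha⟩ := Complex.exists_root (f := f.denom)
      (Polynomial.natDegree_pos_iff_degree_pos.mp (by omega))
    obtain ⟨g, hg⟩ := (Polynomial.dvd_iff_isRoot).mpr ha
    have hgne : g ≠ 0 := by rintro rfl; simp at hg; exact hdd hg
    have hdegg : 0 < g.natDegree := by
      have := hg ▸ Polynomial.natDegree_mul (Polynomial.X_sub_C_ne_zero a) hgne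
      rw [Polynomial.natDegree_X_sub_C] at this
      omega
    obtain ⟨b, hb⟩ := Complex.exists_root (f := g)
      (Polynomial.natDegree_pos_iff_degree_pos.mp hdegg)
    by_cases hab : a = b
    · subst hab
      have h2 : 2 ≤ f.denom.rootMultiplicity a := by
        rw [Polynomial.le_rootMultiplicity_iff hdd, hg, pow_two]
        exact mul_dvd_mul_left _ (Polynomial.dvd_iff_isRoot.mpr hb)
      have hn := aux_num_rm_zero f a ha
      have ho2 : ordAt f (Option.some a) ≤ -2 := by simp [ordAt, hn]; omega
      have h3 := hone (Option.some a)
      have ho2' : (ordAt f (Option.some a) : ℝ) ≤ -2 := by exact_mod_cast ho2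
      linarith [hord (Option.some a)]
    · have hbroot : f.denom.eval b = 0 := by
        rw [hg]; simp [hb.eq_zero]
      have h1 : ordAt f (Option.some a) ≤ -1 := by
        have hn := aux_num_rm_zero f a ha
        have : 0 < f.denom.rootMultiplicity a :=
          (Polynomial.rootMultiplicity_pos hdd).mpr ha
        simp [ordAt, hn]; omega
      have h2 : ordAt f (Option.some b) ≤ -1 := by
        have hn := aux_num_rm_zero f b hbroot
        have : 0 < f.denom.rootMultiplicity b :=
          (Polynomial.rootMultiplicity_pos hdd).mpr hbroot
        simp [ordAt, hn]; omega
      have := hpair (Option.some a) (Option.some b) (by simpa using hab)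
      have := hD1 _ h1; have := hD1 _ h2
      linarith
  refine ⟨?_, hden⟩
  have hordz : -1 ≤ ordAt f Option.none := by
    have h1 := hord Option.none
    have h2 := hone Option.none
    have h3 : (-2 : ℝ) < (ordAt f Option.none : ℝ) := by linarith
    have h4 : (-2 : ℤ) < ordAt f Option.none := by exact_mod_cast h3
    omega
  simp only [ordAt] at hordz
  by_contra hn
  push_neg at hn
  have hnum2 : f.num.natDegree = 2 ∧ f.denom.natDegree = 1 := by omega
  obtain ⟨hn2, hd1⟩ := hnum2
  have hDnone : 1 ≤ D Option.none := by
    apply hD1; simp [ordAt]; omega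
  obtain ⟨a, ha⟩ := Complex.exists_root (f := f.denom)
    (Polynomial.natDegree_pos_iff_degree_pos.mp (by omega))
  have h1 : ordAt f (Option.some a) ≤ -1 := by
    have hnr := aux_num_rm_zero f a ha
    have : 0 < f.denom.rootMultiplicity a :=
      (Polynomial.rootMultiplicity_pos hdd).mpr ha
    simp [ordAt, hnr]; omega
  have := hpair Option.none (Option.some a) (by simp)
  have := hD1 _ h1
  linarith

lemma aux_eval_inj (f : RatFunc ℂ) (hnc : ¬∃ c, f = RatFunc.C c)
    (hnum : f.num.natDegree ≤ 1) (hden : f.denom.natDegree ≤ 1)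
    (q₁ q₂ : Option ℂ) (hne : q₁ ≠ q₂)
    (h₁ : 0 ≤ ordAt f q₁) (h₂ : 0 ≤ ordAt f q₂)
    (heq : evalAt f q₁ = evalAt f q₂) : False := by
  have hdd : f.denom ≠ 0 := f.denom_ne_zero
  have hf0 : f ≠ 0 := by rintro rfl; exact hnc ⟨0, by simp⟩
  set c : ℂ := evalAt f q₁ with hc
  set h : Polynomial ℂ := f.num - Polynomial.C c * f.denom with hh
  have hh0 : h ≠ 0 := by
    intro h0
    apply hnc
    refine ⟨c, ?_⟩
    have hnumc : f.num = Polynomial.C c * f.denom := sub_eq_zero.mp h0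
    conv_lhs => rw [← f.num_div_denom, hnumc]
    rw [map_mul, mul_div_assoc, div_self (RatFunc.algebraMap_ne_zero hdd), mul_one,
      RatFunc.algebraMap_C]
  have hdegh : h.natDegree ≤ 1 := by
    refine (Polynomial.natDegree_sub_le _ _).trans ?_
    simp only [max_le_iff]
    exact ⟨hnum, (Polynomial.natDegree_C_mul_le _ _).trans hden⟩
  have hdenev : ∀ a : ℂ, 0 ≤ ordAt f (Option.some a) → f.denom.eval a ≠ 0 := by
    intro a hord hev
    have hrm : 0 < f.denom.rootMultiplicity a :=
      (Polynomial.rootMultiplicity_pos hdd).mpr hev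
    have hnum0 : 0 < f.num.rootMultiplicity a := by
      simp only [ordAt] at hord; omega
    exact aux_not_root_both f a ((Polynomial.rootMultiplicity_pos
      (by rintro h0; rw [h0, Polynomial.rootMultiplicity_zero] at hnum0; omega)).mp hnum0) hev
  have hroot : ∀ a : ℂ, 0 ≤ ordAt f (Option.some a) → evalAt f (Option.some a) = c →
      h.eval a = 0 := by
    intro a hord hev
    have hd := hdenev a hord
    have : f.num.eval a / f.denom.eval a = c := by
      rw [← hev]; simp [evalAt, RatFunc.eval]
    have hnumeval : f.num.eval a = c * f.denom.eval a := by
      field_simp at this; linear_combination this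
    simp [hh, Polynomial.eval_sub, hnumeval]
  have hnone : 0 ≤ ordAt f Option.none → evalAt f Option.none = c → h.natDegree = 0 := by
    intro hord hev
    simp only [ordAt] at hord
    by_cases hd : f.num.natDegree = f.denom.natDegree
    · have hc' : c = f.num.leadingCoeff / f.denom.leadingCoeff := by
        rw [← hev]; simp [evalAt, hd]
      have hdnz : f.denom.leadingCoeff ≠ 0 := Polynomial.leadingCoeff_ne_zero.mpr hdd
      have hcoeff : h.coeff (f.denom.natDegree) = 0 := by
        simp only [hh, Polynomial.coeff_sub, Polynomial.coeff_C_mul]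
        rw [← hd]
        have h1 : f.num.coeff f.num.natDegree = f.num.leadingCoeff := rfl
        have h2 : f.denom.coeff f.denom.natDegree = f.denom.leadingCoeff := rfl
        rw [h1, hd, h2, hc', div_mul_cancel₀ _ hdnz, sub_self]
      by_cases hd0 : f.denom.natDegree = 0
      · exact absurd (aux_eq_C_of_const f hd0 (hd.trans hd0)) hnc
      · have hd1 : f.denom.natDegree = 1 := by omega
        rw [hd1] at hcoeff
        by_contra hne0
        have hd1' : h.natDegree = 1 := by omega
        have hlc := Polynomial.leadingCoeff_ne_zero.mpr hh0
        rw [Polynomial.leadingCoeff, hd1', hcoeff] at hlc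
        exact hlc rfl
    · have hc0 : c = 0 := by rw [← hev]; simp [evalAt, hd]
      have hnum0 : f.num.natDegree = 0 := by
        by_contra hx
        have h1 : f.denom.natDegree = 1 := by omega
        omega
      rw [hc0] at hh
      simp only [map_zero, zero_mul, sub_zero] at hh
      rw [hh]; exact hnum0
  have htwo : ∀ a b : ℂ, a ≠ b → h.eval a = 0 → h.eval b = 0 → False := by
    intro a b hab ha hb
    obtain ⟨g, hg⟩ := (Polynomial.dvd_iff_isRoot (p := h) (a := a)).mpr ha
    have hgne : g ≠ 0 := by rintro rfl; simp at hg; exact hh0 hg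
    have hdg : g.natDegree = 0 := by
      have := hg ▸ Polynomial.natDegree_mul (Polynomial.X_sub_C_ne_zero a) hgne
      rw [Polynomial.natDegree_X_sub_C] at this
      omega
    have hgC : g = Polynomial.C (g.coeff 0) := Polynomial.eq_C_of_natDegree_eq_zero hdg
    have hk : g.coeff 0 ≠ 0 := by
      intro h0; rw [h0, map_zero] at hgC; exact hgne hgC
    rw [hg, hgC] at hb
    simp at hb
    rcases hb with hb | hb
    · exact hab ((sub_eq_zero.mp hb).symm)
    · exact hk hb
  have hconst : ∀ a : ℂ, h.natDegree = 0 → h.eval a = 0 → False := by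
    intro a hd0 hev
    have hgC : h = Polynomial.C (h.coeff 0) := Polynomial.eq_C_of_natDegree_eq_zero hd0
    rw [hgC] at hev
    simp at hev
    rw [hev, map_zero] at hgC
    exact hh0 hgC
  match q₁, q₂, hne with
  | Option.some a₁, Option.some a₂, hne =>
    exact htwo a₁ a₂ (by simpa using hne) (hroot a₁ h₁ hc.symm) (hroot a₂ h₂ heq.symm)
  | Option.none, Option.some a₂, hne =>
    exact hconst a₂ (hnone h₁ hc.symm) (hroot a₂ h₂ heq.symm)
  | Option.some a₁, Option.none, hne =>
    exact hconst a₁ (hnone h₂ heq.symm) (hroot a₁ h₁ hc.symm)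
  | Option.none, Option.none, hne => exact hne rfl

end Aux


section DcoefAux

open TropGraph

variable {n : ℕ} (G : TropGraph n) (φ : TropGraph.PL G) (E' : Finset G.BE) (U' : Finset G.UE)
  (EΓ : Finset G.BE) (pS pT : G.BE → Option ℂ) (pU : G.UE → Option ℂ) (h : ℝ) (v : G.V)

lemma aux_ddegat_nonneg : 0 ≤ DdegAt G φ E' U' EΓ h v := by
  unfold DdegAt
  split
  · refine add_nonneg (add_nonneg (Finset.sum_nonneg ?_) (Finset.sum_nonneg ?_))
      (Finset.sum_nonneg ?_)
    · intro e he
      rw [Finset.mem_filter] at he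
      linarith [he.2.2.2]
    · intro e he
      rw [Finset.mem_filter] at he
      linarith [he.2.2.2]
    · intro u hu
      rw [Finset.mem_filter] at hu
      have : (φ.uslope u : ℝ) < 0 := by exact_mod_cast hu.2.2
      linarith
  · exact le_refl 0

lemma aux_dcoef_nonneg (q : Option ℂ) : 0 ≤ Dcoef G φ E' U' EΓ pS pT pU h v q := by
  unfold Dcoef
  split
  · refine add_nonneg (add_nonneg (Finset.sum_nonneg ?_) (Finset.sum_nonneg ?_))
      (Finset.sum_nonneg ?_)
    · intro e he
      rw [Finset.mem_filter] at he
      linarith [he.2.2.2.1]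
    · intro e he
      rw [Finset.mem_filter] at he
      linarith [he.2.2.2.1]
    · intro u hu
      rw [Finset.mem_filter] at hu
      have : (φ.uslope u : ℝ) < 0 := by exact_mod_cast hu.2.2.1
      linarith
  · exact le_refl 0

lemma aux_dcoef_le (q : Option ℂ) :
    Dcoef G φ E' U' EΓ pS pT pU h v q ≤ DdegAt G φ E' U' EΓ h v := by
  unfold Dcoef DdegAt
  by_cases hh : φ.val v = h
  · rw [if_pos hh, if_pos hh]
    refine add_le_add (add_le_add ?_ ?_) ?_ <;>
      refine Finset.sum_le_sum_of_subset_of_nonneg ?_ ?_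
    · intro e he
      rw [Finset.mem_filter] at *
      tauto
    · intro e he _
      rw [Finset.mem_filter] at he
      linarith [he.2.2.2]
    · intro e he
      rw [Finset.mem_filter] at *
      tauto
    · intro e he _
      rw [Finset.mem_filter] at he
      linarith [he.2.2.2]
    · intro u hu
      rw [Finset.mem_filter] at *
      tauto
    · intro u hu _
      rw [Finset.mem_filter] at hu
      have : (φ.uslope u : ℝ) < 0 := by exact_mod_cast hu.2.2
      linarith
  · rw [if_neg hh, if_neg hh]

lemma aux_dcoef_pair_le (q₁ q₂ : Option ℂ) (hq : q₁ ≠ q₂) :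
    Dcoef G φ E' U' EΓ pS pT pU h v q₁ + Dcoef G φ E' U' EΓ pS pT pU h v q₂ ≤
      DdegAt G φ E' U' EΓ h v := by
  unfold Dcoef DdegAt
  by_cases hh : φ.val v = h
  · rw [if_pos hh, if_pos hh, if_pos hh]
    have t1 : (∑ e ∈ E'.filter (fun e => e ∉ EΓ ∧ G.src e = v ∧
          φ.val (G.tgt e) - φ.val (G.src e) < 0 ∧ pS e = q₁),
          (φ.val (G.src e) - φ.val (G.tgt e))) +
        (∑ e ∈ E'.filter (fun e => e ∉ EΓ ∧ G.src e = v ∧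
          φ.val (G.tgt e) - φ.val (G.src e) < 0 ∧ pS e = q₂),
          (φ.val (G.src e) - φ.val (G.tgt e))) ≤
        ∑ e ∈ E'.filter (fun e => e ∉ EΓ ∧ G.src e = v ∧
          φ.val (G.tgt e) - φ.val (G.src e) < 0),
          (φ.val (G.src e) - φ.val (G.tgt e)) := by
      rw [← Finset.sum_union (by
        rw [Finset.disjoint_left]
        intro a h1 h2
        rw [Finset.mem_filter] at h1 h2
        exact hq (h1.2.2.2.2 ▸ h2.2.2.2.2 ▸ rfl))]
      refine Finset.sum_le_sum_of_subset_of_nonneg ?_ ?_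
      · intro e he
        rw [Finset.mem_union, Finset.mem_filter, Finset.mem_filter] at he
        rw [Finset.mem_filter]
        tauto
      · intro e he _
        rw [Finset.mem_filter] at he
        linarith [he.2.2.2]
    have t2 : (∑ e ∈ E'.filter (fun e => e ∉ EΓ ∧ G.tgt e = v ∧
          φ.val (G.src e) - φ.val (G.tgt e) < 0 ∧ pT e = q₁),
          (φ.val (G.tgt e) - φ.val (G.src e))) +
        (∑ e ∈ E'.filter (fun e => e ∉ EΓ ∧ G.tgt e = v ∧
          φ.val (G.src e) - φ.val (G.tgt e) < 0 ∧ pT e = q₂),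
          (φ.val (G.tgt e) - φ.val (G.src e))) ≤
        ∑ e ∈ E'.filter (fun e => e ∉ EΓ ∧ G.tgt e = v ∧
          φ.val (G.src e) - φ.val (G.tgt e) < 0),
          (φ.val (G.tgt e) - φ.val (G.src e)) := by
      rw [← Finset.sum_union (by
        rw [Finset.disjoint_left]
        intro a h1 h2
        rw [Finset.mem_filter] at h1 h2
        exact hq (h1.2.2.2.2 ▸ h2.2.2.2.2 ▸ rfl))]
      refine Finset.sum_le_sum_of_subset_of_nonneg ?_ ?_
      · intro e he
        rw [Finset.mem_union, Finset.mem_filter, Finset.mem_filter] at he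
        rw [Finset.mem_filter]
        tauto
      · intro e he _
        rw [Finset.mem_filter] at he
        linarith [he.2.2.2]
    have t3 : (∑ u ∈ U'.filter (fun u => G.att u = v ∧ φ.uslope u < 0 ∧ pU u = q₁),
          (-(φ.uslope u) : ℝ)) +
        (∑ u ∈ U'.filter (fun u => G.att u = v ∧ φ.uslope u < 0 ∧ pU u = q₂),
          (-(φ.uslope u) : ℝ)) ≤
        ∑ u ∈ U'.filter (fun u => G.att u = v ∧ φ.uslope u < 0), (-(φ.uslope u) : ℝ) := by
      rw [← Finset.sum_union (by
        rw [Finset.disjoint_left]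
        intro a h1 h2
        rw [Finset.mem_filter] at h1 h2
        exact hq (h1.2.2.2 ▸ h2.2.2.2 ▸ rfl))]
      refine Finset.sum_le_sum_of_subset_of_nonneg ?_ ?_
      · intro u hu
        rw [Finset.mem_union, Finset.mem_filter, Finset.mem_filter] at hu
        rw [Finset.mem_filter]
        tauto
      · intro u hu _
        rw [Finset.mem_filter] at hu
        have : (φ.uslope u : ℝ) < 0 := by exact_mod_cast hu.2.2
        linarith
    linarith
  · rw [if_neg hh, if_neg hh, if_neg hh]
    simp

lemma aux_dcoef_node_zero
    (hd1 : ∀ e₁ ∈ E', ∀ e₂ ∈ E', G.src e₁ = v → G.src e₂ = v → pS e₁ = pS e₂ → e₁ = e₂)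
    (hd2 : ∀ e₁ ∈ E', ∀ e₂ ∈ E', G.tgt e₁ = v → G.tgt e₂ = v → pT e₁ = pT e₂ → e₁ = e₂)
    (hd4 : ∀ e₁ ∈ E', ∀ e₂ ∈ E', G.src e₁ = v → G.tgt e₂ = v → pS e₁ ≠ pT e₂)
    (hd5 : ∀ e₁ ∈ E', ∀ u ∈ U', G.src e₁ = v → G.att u = v → pS e₁ ≠ pU u)
    (hd6 : ∀ e₁ ∈ E', ∀ u ∈ U', G.tgt e₁ = v → G.att u = v → pT e₁ ≠ pU u)
    (e₀ : G.BE) (he₀ : e₀ ∈ EΓ) (he₀' : e₀ ∈ E')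
    (hor : G.src e₀ = v ∨ G.tgt e₀ = v) :
    Dcoef G φ E' U' EΓ pS pT pU h v (if G.src e₀ = v then pS e₀ else pT e₀) = 0 := by
  unfold Dcoef
  split
  · rcases hor with hs | ht
    · rw [if_pos hs]
      have f1 : E'.filter (fun e => e ∉ EΓ ∧ G.src e = v ∧
          φ.val (G.tgt e) - φ.val (G.src e) < 0 ∧ pS e = pS e₀) = ∅ := by
        rw [Finset.filter_eq_empty_iff]
        rintro e he ⟨hn, hsrc, _, hpq⟩
        exact hn ((hd1 e he e₀ he₀' hsrc hs hpq) ▸ he₀)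
      have f2 : E'.filter (fun e => e ∉ EΓ ∧ G.tgt e = v ∧
          φ.val (G.src e) - φ.val (G.tgt e) < 0 ∧ pT e = pS e₀) = ∅ := by
        rw [Finset.filter_eq_empty_iff]
        rintro e he ⟨_, htgt, _, hpq⟩
        exact hd4 e₀ he₀' e he hs htgt hpq.symm
      have f3 : U'.filter (fun u => G.att u = v ∧ φ.uslope u < 0 ∧ pU u = pS e₀) = ∅ := by
        rw [Finset.filter_eq_empty_iff]
        rintro u hu ⟨hatt, _, hpq⟩
        exact hd5 e₀ he₀' u hu hs hatt hpq.symm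
      rw [f1, f2, f3]
      simp
    · have hsne : ¬ G.src e₀ = v := fun hcon => G.src_ne_tgt e₀ (hcon.trans ht.symm)
      rw [if_neg hsne]
      have f1 : E'.filter (fun e => e ∉ EΓ ∧ G.src e = v ∧
          φ.val (G.tgt e) - φ.val (G.src e) < 0 ∧ pS e = pT e₀) = ∅ := by
        rw [Finset.filter_eq_empty_iff]
        rintro e he ⟨_, hsrc, _, hpq⟩
        exact hd4 e he e₀ he₀' hsrc ht hpq
      have f2 : E'.filter (fun e => e ∉ EΓ ∧ G.tgt e = v ∧
          φ.val (G.src e) - φ.val (G.tgt e) < 0 ∧ pT e = pT e₀) = ∅ := by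
        rw [Finset.filter_eq_empty_iff]
        rintro e he ⟨hn, htgt, _, hpq⟩
        exact hn ((hd2 e he e₀ he₀' htgt ht hpq) ▸ he₀)
      have f3 : U'.filter (fun u => G.att u = v ∧ φ.uslope u < 0 ∧ pU u = pT e₀) = ∅ := by
        rw [Finset.filter_eq_empty_iff]
        rintro u hu ⟨hatt, _, hpq⟩
        exact hd6 e₀ he₀' u hu ht hatt hpq.symm
      rw [f1, f2, f3]
      simp
  · rfl

end DcoefAux

open TropGraph in
/-- Necessity for 2-vertex-connected subgraphs: suppose `Γ` is
2-vertex connected (deleting any single vertex leaves it connected), has at least two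
vertices, and has no 1-valent vertices.  If `φ` is `C₀`-ample on `Γ` in `Γ'`, then
`deg(D_φ) ≥ 2` and `deg(D_φ|_{ℙ¹_v}) ≥ 1` for every vertex `v` of `Γ` with
`φ(v) = h`, where `h = min_{v ∈ V(Γ)} φ(v)`. -/
theorem c0ample_necessity_two_connected
    {n : ℕ} (G : TropGraph n) (φ : TropGraph.PL G)
    (P' : Finset G.V) (E' : Finset G.BE) (U' : Finset G.UE)
    (PΓ : Finset G.V) (EΓ : Finset G.BE) (hΓne : PΓ.Nonempty)
    (pS pT : G.BE → Option ℂ) (pU : G.UE → Option ℂ)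
    -- Γ' = (P', E', U') is a subgraph of Σ
    (hE' : ∀ e ∈ E', G.src e ∈ P' ∧ G.tgt e ∈ P')
    (hU' : ∀ u ∈ U', G.att u ∈ P')
    -- Γ = (PΓ, EΓ) is a bounded connected subgraph of Γ'
    (hPΓ : ∀ w ∈ PΓ, w ∈ P') (hEΓsub : EΓ ⊆ E')
    (hEΓ : ∀ e ∈ EΓ, G.src e ∈ PΓ ∧ G.tgt e ∈ PΓ)
    (hΓconn : ∀ a ∈ PΓ, ∀ b ∈ PΓ, Relation.ReflTransGen
      (fun a b => ∃ e ∈ EΓ, (G.src e = a ∧ G.tgt e = b) ∨ (G.src e = b ∧ G.tgt e = a)) a b)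
    -- Γ is contained in the interior of Γ': no vertex of Γ is incident to an
    -- edge of Σ not in Γ'
    (hinter : ∀ w ∈ PΓ, (∀ e : G.BE, (G.src e = w ∨ G.tgt e = w) → e ∈ E') ∧
      ∀ u : G.UE, G.att u = w → u ∈ U')
    -- for each vertex v of Γ, the chosen node and boundary points on the
    -- component ℙ¹_v are pairwise distinct
    (hdist : ∀ v ∈ PΓ,
      (∀ e₁ ∈ E', ∀ e₂ ∈ E', G.src e₁ = v → G.src e₂ = v → pS e₁ = pS e₂ → e₁ = e₂) ∧
      (∀ e₁ ∈ E', ∀ e₂ ∈ E', G.tgt e₁ = v → G.tgt e₂ = v → pT e₁ = pT e₂ → e₁ = e₂) ∧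
      (∀ u₁ ∈ U', ∀ u₂ ∈ U', G.att u₁ = v → G.att u₂ = v → pU u₁ = pU u₂ → u₁ = u₂) ∧
      (∀ e₁ ∈ E', ∀ e₂ ∈ E', G.src e₁ = v → G.tgt e₂ = v → pS e₁ ≠ pT e₂) ∧
      (∀ e₁ ∈ E', ∀ u ∈ U', G.src e₁ = v → G.att u = v → pS e₁ ≠ pU u) ∧
      (∀ e₁ ∈ E', ∀ u ∈ U', G.tgt e₁ = v → G.att u = v → pT e₁ ≠ pU u))
    -- Γ is 2-vertex connected: deleting any single vertex leaves it connected
    (h2conn : ∀ u ∈ PΓ, ∀ a ∈ PΓ, ∀ b ∈ PΓ, a ≠ u → b ≠ u →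
      Relation.ReflTransGen (fun a b => a ≠ u ∧ b ≠ u ∧
        ∃ e ∈ EΓ, (G.src e = a ∧ G.tgt e = b) ∨ (G.src e = b ∧ G.tgt e = a)) a b)
    -- Γ has at least two vertices
    (hcard : 2 ≤ PΓ.card)
    -- Γ has no 1-valent vertices
    (hval : ∀ w ∈ PΓ,
      (EΓ.filter (fun e => G.src e = w)).card +
        (EΓ.filter (fun e => G.tgt e = w)).card ≠ 1)
    -- φ is C₀-ample on Γ in Γ'
    (hample : C0Ample G φ PΓ E' U' EΓ pS pT pU (PΓ.inf' hΓne φ.val)) :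
    2 ≤ Ddeg G φ PΓ E' U' EΓ (PΓ.inf' hΓne φ.val) ∧
      ∀ v ∈ PΓ, φ.val v = PΓ.inf' hΓne φ.val →
        1 ≤ DdegAt G φ E' U' EΓ (PΓ.inf' hΓne φ.val) v := by
  classical
  obtain ⟨f, hdiv, hmatch, hncst⟩ := hample
  set H := PΓ.inf' hΓne φ.val with hHdef
  -- Part 2: each minimal vertex contributes at least 1
  have part2 : ∀ v ∈ PΓ, φ.val v = H → 1 ≤ DdegAt G φ E' U' EΓ H v := by
    intro v hv hvh
    have hnc : ¬∃ c, f v = RatFunc.C c := (hncst v hv).mpr hvh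
    obtain ⟨q, hq⟩ := aux_exists_pole (f v) hnc
    have h1 := hdiv v hv q
    have h2 : (ordAt (f v) q : ℝ) ≤ -1 := by exact_mod_cast hq
    have h3 := aux_dcoef_le G φ E' U' EΓ pS pT pU H v q
    linarith
  refine ⟨?_, part2⟩
  obtain ⟨v₀, hv₀, hv₀h⟩ := Finset.exists_mem_eq_inf' hΓne φ.val
  have hv₀H : φ.val v₀ = H := hv₀h.symm
  have hsum_ge : ∀ s : Finset G.V, s ⊆ PΓ →
      ∑ v ∈ s, DdegAt G φ E' U' EΓ H v ≤ Ddeg G φ PΓ E' U' EΓ H :=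
    fun s hs => Finset.sum_le_sum_of_subset_of_nonneg hs
      (fun v _ _ => aux_ddegat_nonneg G φ E' U' EΓ H v)
  by_cases hS : ∃ w ∈ PΓ, w ≠ v₀ ∧ φ.val w = H
  · obtain ⟨w, hw, hwne, hwH⟩ := hS
    have hsub := hsum_ge {w, v₀} (by
      intro x hx
      rcases Finset.mem_insert.mp hx with rfl | hx
      · exact hw
      · rw [Finset.mem_singleton] at hx
        exact hx ▸ hv₀)
    rw [Finset.sum_pair hwne] at hsub
    have p1 := part2 w hw hwH
    have p2 := part2 v₀ hv₀ hv₀H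
    linarith
  · push_neg at hS
    have huniq : ∀ w ∈ PΓ, φ.val w = H → w = v₀ := by
      intro w hw hwH
      by_contra hne
      exact hS w hw hne hwH
    have key : 2 ≤ DdegAt G φ E' U' EΓ H v₀ := by
      by_contra hlt
      push_neg at hlt
      have hnc : ¬∃ c, f v₀ = RatFunc.C c := (hncst v₀ hv₀).mpr hv₀H
      set F := f v₀ with hFdef
      have hord : ∀ q, 0 ≤ Dcoef G φ E' U' EΓ pS pT pU H v₀ q + (ordAt F q : ℝ) :=
        fun q => hdiv v₀ hv₀ q
      have hone : ∀ q, Dcoef G φ E' U' EΓ pS pT pU H v₀ q < 2 :=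
        fun q => lt_of_le_of_lt (aux_dcoef_le G φ E' U' EΓ pS pT pU H v₀ q) hlt
      have hpairD : ∀ q₁ q₂, q₁ ≠ q₂ →
          Dcoef G φ E' U' EΓ pS pT pU H v₀ q₁ + Dcoef G φ E' U' EΓ pS pT pU H v₀ q₂ < 2 :=
        fun q₁ q₂ hq => lt_of_le_of_lt (aux_dcoef_pair_le G φ E' U' EΓ pS pT pU H v₀ q₁ q₂ hq) hlt
      obtain ⟨hnumdeg, hdendeg⟩ := aux_deg_le_one F _ hord hone hpairD
      -- all other vertices carry constant functions
      have hconstw : ∀ w ∈ PΓ, w ≠ v₀ → ∃ c, f w = RatFunc.C c := by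
        intro w hw hne
        by_contra hcc
        exact hne (huniq w hw ((hncst w hw).mp hcc))
      -- constants propagate along paths avoiding v₀
      have hpath : ∀ a b : G.V, Relation.ReflTransGen (fun a b => a ≠ v₀ ∧ b ≠ v₀ ∧
          ∃ e ∈ EΓ, (G.src e = a ∧ G.tgt e = b) ∨ (G.src e = b ∧ G.tgt e = a)) a b →
          f a = f b := by
        intro a b hr
        induction hr with
        | refl => rfl
        | @tail bb cc h1 h2 ih =>
          obtain ⟨hbne, hcne, e, heΓ, hor⟩ := h2
          have hm := hmatch e heΓ
          have hsrcP := (hEΓ e heΓ).1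
          have htgtP := (hEΓ e heΓ).2
          rcases hor with ⟨hs, ht⟩ | ⟨hs, ht⟩
          · subst hs; subst ht
            obtain ⟨c1, hc1⟩ := hconstw _ hsrcP hbne
            obtain ⟨c2, hc2⟩ := hconstw _ htgtP hcne
            rw [hc1, hc2, aux_evalAt_C, aux_evalAt_C] at hm
            rw [ih, hc1, hc2, hm]
          · subst hs; subst ht
            obtain ⟨c1, hc1⟩ := hconstw _ htgtP hbne
            obtain ⟨c2, hc2⟩ := hconstw _ hsrcP hcne
            rw [hc1, hc2, aux_evalAt_C, aux_evalAt_C] at hm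
            rw [ih, hc1, hc2, hm]
      -- find two distinct edges of Γ incident to v₀
      obtain ⟨b, hb, hbne⟩ := Finset.exists_mem_ne hcard v₀
      have hone_edge : ∃ e ∈ EΓ, G.src e = v₀ ∨ G.tgt e = v₀ := by
        rcases (Relation.ReflTransGen.cases_head (hΓconn v₀ hv₀ b hb)) with heq | ⟨mid, hmid, _⟩
        · exact absurd heq.symm hbne
        · obtain ⟨e, heΓ, hor⟩ := hmid
          rcases hor with ⟨hs, _⟩ | ⟨_, ht⟩
          · exact ⟨e, heΓ, Or.inl hs⟩
          · exact ⟨e, heΓ, Or.inr ht⟩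
      have hdisjAB : Disjoint (EΓ.filter (fun e => G.src e = v₀))
          (EΓ.filter (fun e => G.tgt e = v₀)) := by
        rw [Finset.disjoint_left]
        intro e h1 h2
        rw [Finset.mem_filter] at h1 h2
        exact G.src_ne_tgt e (h1.2.trans h2.2.symm)
      have hcardAB : 2 ≤ (EΓ.filter (fun e => G.src e = v₀) ∪
          EΓ.filter (fun e => G.tgt e = v₀)).card := by
        rw [Finset.card_union_of_disjoint hdisjAB]
        obtain ⟨e, heΓ, hor⟩ := hone_edge
        have hmem : e ∈ EΓ.filter (fun e => G.src e = v₀) ∪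
            EΓ.filter (fun e => G.tgt e = v₀) := by
          rw [Finset.mem_union, Finset.mem_filter, Finset.mem_filter]
          tauto
        have h1 : 1 ≤ (EΓ.filter (fun e => G.src e = v₀) ∪
            EΓ.filter (fun e => G.tgt e = v₀)).card :=
          Finset.card_pos.mpr ⟨e, hmem⟩
        rw [Finset.card_union_of_disjoint hdisjAB] at h1
        have := hval v₀ hv₀
        omega
      obtain ⟨e₁, he₁, e₂, he₂, he12⟩ := Finset.one_lt_card.mp hcardAB
      rw [Finset.mem_union, Finset.mem_filter, Finset.mem_filter] at he₁ he₂
      have he₁Γ : e₁ ∈ EΓ := by tauto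
      have he₂Γ : e₂ ∈ EΓ := by tauto
      have hor₁ : G.src e₁ = v₀ ∨ G.tgt e₁ = v₀ := by tauto
      have hor₂ : G.src e₂ = v₀ ∨ G.tgt e₂ = v₀ := by tauto
      obtain ⟨hdd1, hdd2, hdd3, hdd4, hdd5, hdd6⟩ := hdist v₀ hv₀
      -- the node points
      set q₁ : Option ℂ := if G.src e₁ = v₀ then pS e₁ else pT e₁ with hq₁def
      set q₂ : Option ℂ := if G.src e₂ = v₀ then pS e₂ else pT e₂ with hq₂def
      have htgt_of_not_src : ∀ e : G.BE, (G.src e = v₀ ∨ G.tgt e = v₀) →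
          ¬ G.src e = v₀ → G.tgt e = v₀ := by tauto
      have hqne : q₁ ≠ q₂ := by
        rw [hq₁def, hq₂def]
        by_cases h1 : G.src e₁ = v₀ <;> by_cases h2 : G.src e₂ = v₀
        · rw [if_pos h1, if_pos h2]
          intro hpq
          exact he12 (hdd1 e₁ (hEΓsub he₁Γ) e₂ (hEΓsub he₂Γ) h1 h2 hpq)
        · rw [if_pos h1, if_neg h2]
          exact hdd4 e₁ (hEΓsub he₁Γ) e₂ (hEΓsub he₂Γ) h1 (htgt_of_not_src e₂ hor₂ h2)
        · rw [if_neg h1, if_pos h2]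
          exact fun hpq => hdd4 e₂ (hEΓsub he₂Γ) e₁ (hEΓsub he₁Γ) h2
            (htgt_of_not_src e₁ hor₁ h1) hpq.symm
        · rw [if_neg h1, if_neg h2]
          intro hpq
          exact he12 (hdd2 e₁ (hEΓsub he₁Γ) e₂ (hEΓsub he₂Γ)
            (htgt_of_not_src e₁ hor₁ h1) (htgt_of_not_src e₂ hor₂ h2) hpq)
      -- orders at the node points are nonnegative
      have hq0 : ∀ e ∈ EΓ, (G.src e = v₀ ∨ G.tgt e = v₀) →
          0 ≤ ordAt F (if G.src e = v₀ then pS e else pT e) := by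
        intro e he hor
        have hz := aux_dcoef_node_zero G φ E' U' EΓ pS pT pU H v₀
          hdd1 hdd2 hdd4 hdd5 hdd6 e he (hEΓsub he) hor
        have hdv := hdiv v₀ hv₀ (if G.src e = v₀ then pS e else pT e)
        rw [hz, zero_add] at hdv
        rw [hFdef]
        exact_mod_cast hdv
      -- the value of F at the node point of an incident edge
      have hval_e : ∀ e ∈ EΓ, ∀ _ : G.src e = v₀ ∨ G.tgt e = v₀,
          ∃ w, w ∈ PΓ ∧ w ≠ v₀ ∧ ∀ c : ℂ, f w = RatFunc.C c →
            evalAt F (if G.src e = v₀ then pS e else pT e) = c := by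
        intro e he hor
        rcases hor with hs | ht
        · refine ⟨G.tgt e, (hEΓ e he).2, ?_, ?_⟩
          · intro hcon
            exact G.src_ne_tgt e (hs.trans hcon.symm)
          · intro c hc
            have hm := hmatch e he
            rw [hs, hc, aux_evalAt_C] at hm
            rw [if_pos hs]
            exact hm
        · have hsne : ¬ G.src e = v₀ := fun hcon => G.src_ne_tgt e (hcon.trans ht.symm)
          refine ⟨G.src e, (hEΓ e he).1, hsne, ?_⟩
          intro c hc
          have hm := hmatch e he
          rw [ht, hc, aux_evalAt_C] at hm
          rw [if_neg hsne]
          exact hm.symm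
      obtain ⟨w₁, hw₁P, hw₁ne, hval₁⟩ := hval_e e₁ he₁Γ hor₁
      obtain ⟨w₂, hw₂P, hw₂ne, hval₂⟩ := hval_e e₂ he₂Γ hor₂
      obtain ⟨c, hc⟩ := hconstw w₁ hw₁P hw₁ne
      have hfw : f w₁ = f w₂ := hpath w₁ w₂ (h2conn v₀ hv₀ w₁ hw₁P w₂ hw₂P hw₁ne hw₂ne)
      have heval : evalAt F q₁ = evalAt F q₂ := by
        rw [hq₁def, hq₂def, hval₁ c hc, hval₂ c (hfw ▸ hc)]
      exact aux_eval_inj F hnc hnumdeg hdendeg q₁ q₂ hqne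
        (hq₁def ▸ hq0 e₁ he₁Γ hor₁) (hq₂def ▸ hq0 e₂ he₂Γ hor₂) heval
    have hsub := hsum_ge {v₀} (by simpa using hv₀)
    rw [Finset.sum_singleton] at hsub
    unfold TropGraph.Ddeg at hsub ⊢
    linarith
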